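/- Inverse expansion of monomials in Zernike polynomials: for integers j ≥ m ≥ 0 with j-m even, x^j = Σ_{n=m, n≡m (mod 2)}^{j} h_{j,n,m} R_n^m(x), where h_{j,n,m} = (n+1)/(1+(j+n)/2) * C((j-m)/2, (n-m)/2) / C((j+n)/2, (n-m)/2). -/

import Mathlib

open Nat

noncomputable def R (n m : ℕ) (x : ℝ) : ℝ :=
  (-1 : ℝ) ^ ((n - m) / 2) * x ^ m *
    ∑ s ∈ Finset.range ((n - m) / 2 + 1),
      (((n + m) / 2 + s).choose ((n - m) / 2 - s) : ℝ) * ((m + 2 * s).choose s : ℝ) *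
        (-x ^ 2) ^ s

noncomputable def h (j n m : ℕ) : ℝ :=
  ((n : ℝ) + 1) / (1 + ((j + n) / 2 : ℕ)) * (((j - m) / 2).choose ((n - m) / 2) : ℝ) /
    ((((j + n) / 2).choose ((n - m) / 2) : ℝ))

lemma alt_telescope (f : ℕ → ℝ) (n : ℕ) :
    ∑ i ∈ Finset.range (n + 1), (-1 : ℝ) ^ i * (f i + f (i + 1)) =
      f 0 + (-1 : ℝ) ^ n * f (n + 1) := by
  induction n with
  | zero => simp
  | succ n ih =>
    rw [Finset.sum_range_succ, ih, pow_succ]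
    ring

noncomputable def G (c q i : ℕ) : ℝ := i * (q.choose i) * (c + i)! / (c + q + i)!

noncomputable def T (c q i : ℕ) : ℝ :=
  (c + 2 * i + 1) * (q.choose i) * (c + i)! / (c + q + i + 1)!

lemma Gstep (c q i : ℕ) (hi : i ≤ q) : G c q i + G c q (i + 1) = q * T c q i := by
  have h1 : (q.choose (i+1) : ℝ) * (i+1) = q.choose i * (q - i : ℕ) := by
    exact_mod_cast congrArg Nat.cast (Nat.choose_succ_right_eq q i)
  have h2 : ((c + i + 1)! : ℝ) = (c + i + 1) * (c + i)! := by
    exact_mod_cast congrArg Nat.cast (Nat.factorial_succ (c + i))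
  have h3 : ((c + q + i + 1)! : ℝ) = (c + q + i + 1) * (c + q + i)! := by
    exact_mod_cast congrArg Nat.cast (Nat.factorial_succ (c + q + i))
  have h4 : ((q - i : ℕ) : ℝ) = (q : ℝ) - i := by
    push_cast [Nat.cast_sub hi]; ring
  have hne1 : ((c + q + i)! : ℝ) ≠ 0 := by exact_mod_cast (c+q+i).factorial_ne_zero
  have hne2 : ((c + q + i + 1) : ℝ) ≠ 0 := by positivity
  simp only [G, T]
  have e1 : c + (i+1) = c + i + 1 := by ring
  have e2 : c + q + (i+1) = c + q + i + 1 := by ring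
  rw [e1, e2, h2, h3]
  field_simp
  rw [h4] at h1
  push_cast
  linear_combination (↑c+↑i+1 : ℝ) * h1

lemma sumT (c q : ℕ) (hq : 1 ≤ q) :
    ∑ i ∈ Finset.range (q + 1), (-1 : ℝ) ^ i * T c q i = 0 := by
  have key : ∑ i ∈ Finset.range (q + 1), (-1 : ℝ) ^ i * (G c q i + G c q (i + 1)) =
      G c q 0 + (-1 : ℝ) ^ q * G c q (q + 1) := alt_telescope _ q
  have hG0 : G c q 0 = 0 := by simp [G]
  have hGq : G c q (q + 1) = 0 := by simp [G, Nat.choose_succ_self]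
  have heq : ∀ i ∈ Finset.range (q + 1), (-1 : ℝ) ^ i * (G c q i + G c q (i + 1)) =
      (q : ℝ) * ((-1 : ℝ) ^ i * T c q i) := by
    intro i hi
    rw [Gstep c q i (by simpa using Nat.lt_succ_iff.mp (Finset.mem_range.mp hi))]
    ring
  rw [Finset.sum_congr rfl heq, ← Finset.mul_sum, hG0, hGq] at key
  have hq0 : (q : ℝ) ≠ 0 := by positivity
  simpa [hq0] using key

lemma h_eval (m p k : ℕ) :
    h (m + 2 * p) (m + 2 * k) m =
      ((m : ℝ) + 2 * k + 1) / ((m : ℕ) + p + k + 1 : ℕ) * (p.choose k : ℝ) /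
        ((m + p + k).choose k : ℝ) := by
  have e1 : (m + 2 * p + (m + 2 * k)) / 2 = m + p + k := by omega
  have e2 : (m + 2 * p - m) / 2 = p := by omega
  have e3 : (m + 2 * k - m) / 2 = k := by omega
  simp only [h]
  rw [e1, e2, e3]
  push_cast
  ring

lemma term_eq (m p s i : ℕ) (hsp : s ≤ p) (hi : i ≤ p - s) :
    h (m + 2 * p) (m + 2 * (s + i)) m * ((m + (s + i) + s).choose i : ℝ) *
        ((m + 2 * s).choose s : ℝ) =
      ((p ! : ℝ) * (m + p)! * ((m + 2 * s).choose s) / ((m + 2 * s)! * (p - s)!)) *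
        T (m + 2 * s) (p - s) i := by
  set k := s + i with hk
  have hkp : k ≤ p := by omega
  rw [h_eval, T]
  -- rewrite chooses as factorial ratios
  have c1 : (p.choose k : ℝ) = p ! / (k ! * (p - k)!) := Nat.cast_choose ℝ hkp
  have c2 : ((m + p + k).choose k : ℝ) = (m + p + k)! / (k ! * (m + p)!) := by
    have := Nat.cast_choose ℝ (show k ≤ m + p + k by omega)
    rwa [show m + p + k - k = m + p by omega] at this
  have c3 : ((m + (s + i) + s).choose i : ℝ) = (m + k + s)! / (i ! * (m + 2 * s)!) := by
    have := Nat.cast_choose ℝ (show i ≤ m + (s + i) + s by omega)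
    rwa [show m + (s + i) + s - i = m + 2 * s by omega,
      show m + (s + i) + s = m + k + s by omega] at this
  have c4 : ((p - s).choose i : ℝ) = (p - s)! / (i ! * (p - k)!) := by
    have := Nat.cast_choose ℝ hi
    rwa [show p - s - i = p - k by omega] at this
  have c5 : (m + 2 * s + (p - s) + i + 1)! = (m + p + k + 1) * (m + p + k)! := by
    rw [show m + 2 * s + (p - s) + i + 1 = m + p + k + 1 by omega, Nat.factorial_succ]
  have c6 : m + 2 * s + i = m + k + s := by omega
  have c7 : ((m : ℝ) + 2 * ↑s + 2 * ↑i + 1) = (m : ℝ) + 2 * k + 1 := by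
    push_cast [hk]; ring
  rw [c1, c2, c3, c4, c5, c6, ← c7]
  have n1 : (k ! : ℝ) ≠ 0 := by exact_mod_cast k.factorial_ne_zero
  have n2 : ((p - k)! : ℝ) ≠ 0 := by exact_mod_cast (p - k).factorial_ne_zero
  have n3 : ((m + p + k)! : ℝ) ≠ 0 := by exact_mod_cast (m + p + k).factorial_ne_zero
  have n4 : ((m + p)! : ℝ) ≠ 0 := by exact_mod_cast (m + p).factorial_ne_zero
  have n5 : (i ! : ℝ) ≠ 0 := by exact_mod_cast i.factorial_ne_zero
  have n6 : ((m + 2 * s)! : ℝ) ≠ 0 := by exact_mod_cast (m + 2 * s).factorial_ne_zero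
  have n7 : ((p - s)! : ℝ) ≠ 0 := by exact_mod_cast (p - s).factorial_ne_zero
  have n8 : ((m : ℝ) + p + k + 1) ≠ 0 := by positivity
  field_simp
  push_cast
  ring

lemma coeff (m p s : ℕ) (hs : s ≤ p) :
    ∑ i ∈ Finset.range (p - s + 1),
      h (m + 2 * p) (m + 2 * (s + i)) m * (-1 : ℝ) ^ (s + i) *
        ((m + (s + i) + s).choose i : ℝ) * ((m + 2 * s).choose s : ℝ) * (-1 : ℝ) ^ s
    = if s = p then 1 else 0 := by
  have key : ∀ i ∈ Finset.range (p - s + 1),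
      h (m + 2 * p) (m + 2 * (s + i)) m * (-1 : ℝ) ^ (s + i) *
        ((m + (s + i) + s).choose i : ℝ) * ((m + 2 * s).choose s : ℝ) * (-1 : ℝ) ^ s
      = ((p ! : ℝ) * (m + p)! * ((m + 2 * s).choose s) / ((m + 2 * s)! * (p - s)!)) *
          ((-1 : ℝ) ^ i * T (m + 2 * s) (p - s) i) := by
    intro i hi
    have hi' : i ≤ p - s := by
      have := Finset.mem_range.mp hi; omega
    have ht := term_eq m p s i hs hi'
    have hsgn : (-1 : ℝ) ^ (s + i) * (-1 : ℝ) ^ s = (-1 : ℝ) ^ i := by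
      rw [← pow_add, show s + i + s = 2 * s + i by ring, pow_add, pow_mul]
      norm_num
    calc h (m + 2 * p) (m + 2 * (s + i)) m * (-1 : ℝ) ^ (s + i) *
          ((m + (s + i) + s).choose i : ℝ) * ((m + 2 * s).choose s : ℝ) * (-1 : ℝ) ^ s
        = (h (m + 2 * p) (m + 2 * (s + i)) m * ((m + (s + i) + s).choose i : ℝ) *
            ((m + 2 * s).choose s : ℝ)) * ((-1 : ℝ) ^ (s + i) * (-1 : ℝ) ^ s) := by ring
      _ = _ := by rw [ht, hsgn]; ring
  rw [Finset.sum_congr rfl key, ← Finset.mul_sum]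
  by_cases hsp : s = p
  · subst hsp
    simp only [Nat.sub_self, if_pos rfl]
    rw [show (0 : ℕ) + 1 = 1 from rfl, Finset.sum_range_one]
    simp only [pow_zero, one_mul, T]
    have c1 : ((m + 2 * s).choose s : ℝ) = (m + 2 * s)! / (s ! * (m + s)!) := by
      have := Nat.cast_choose ℝ (show s ≤ m + 2 * s by omega)
      rwa [show m + 2 * s - s = m + s by omega] at this
    rw [show m + 2 * s + 0 + 0 + 1 = m + 2 * s + 1 by omega, Nat.factorial_succ]
    rw [show m + 2 * s + 0 = m + 2 * s by omega]
    rw [c1]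
    have n1 : (s ! : ℝ) ≠ 0 := by exact_mod_cast s.factorial_ne_zero
    have n2 : ((m + s)! : ℝ) ≠ 0 := by exact_mod_cast (m + s).factorial_ne_zero
    have n3 : ((m + 2 * s)! : ℝ) ≠ 0 := by exact_mod_cast (m + 2 * s).factorial_ne_zero
    have n4 : ((m + 2 * s + 1 : ℕ) : ℝ) ≠ 0 := by positivity
    simp only [Nat.choose_self, Nat.choose_zero_right, Nat.cast_one, Nat.factorial_zero]
    push_cast
    field_simp
    ring
  · have hq : 1 ≤ p - s := by omega
    rw [sumT _ _ hq, mul_zero, if_neg hsp]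

/-- Inverse expansion of monomials in Zernike polynomials:
x^j = Σ_{n=m, n ≡ m (mod 2)}^{j} h_{j,n,m} R_n^m(x). -/
theorem monomial_zernike_expansion (j m : ℕ) (hmj : m ≤ j) (hpar : Even (j - m)) (x : ℝ) :
    x ^ j = ∑ n ∈ Finset.range (j + 1),
      if m ≤ n ∧ Even (n - m) then h j n m * R n m x else 0 := by
  obtain ⟨p, hp⟩ := hpar
  have hj : j = m + 2 * p := by omega
  subst hj
  rw [← Finset.sum_filter]
  have step1 : ∑ n ∈ (Finset.range (m + 2 * p + 1)).filter (fun n => m ≤ n ∧ Even (n - m)),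
        h (m + 2 * p) n m * R n m x
      = ∑ k ∈ Finset.range (p + 1), h (m + 2 * p) (m + 2 * k) m * R (m + 2 * k) m x := by
    apply Finset.sum_nbij' (i := fun n => (n - m) / 2) (j := fun k => m + 2 * k)
    · intro n hn
      simp only [Finset.mem_filter, Finset.mem_range] at hn
      obtain ⟨h1, h2, h3⟩ := hn
      rw [Nat.even_iff] at h3
      simp only [Finset.mem_range]
      omega
    · intro k hk
      simp only [Finset.mem_range] at hk
      simp only [Finset.mem_filter, Finset.mem_range]
      refine ⟨by omega, by omega, ?_⟩
      rw [Nat.even_iff]; omega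
    · intro n hn
      simp only [Finset.mem_filter, Finset.mem_range] at hn
      obtain ⟨h1, h2, h3⟩ := hn
      rw [Nat.even_iff] at h3
      omega
    · intro k hk
      simp only [Finset.mem_range] at hk
      omega
    · intro n hn
      simp only [Finset.mem_filter, Finset.mem_range] at hn
      obtain ⟨h1, h2, h3⟩ := hn
      rw [Nat.even_iff] at h3
      have : m + 2 * ((n - m) / 2) = n := by omega
      rw [this]
  rw [step1]
  have hR : ∀ k : ℕ, R (m + 2 * k) m x =
      (-1 : ℝ) ^ k * x ^ m * ∑ s ∈ Finset.range (k + 1),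
        ((m + k + s).choose (k - s) : ℝ) * ((m + 2 * s).choose s : ℝ) * (-x ^ 2) ^ s := by
    intro k
    simp only [R]
    rw [show (m + 2 * k - m) / 2 = k by omega, show (m + 2 * k + m) / 2 = m + k by omega]
  have step2 : ∑ k ∈ Finset.range (p + 1), h (m + 2 * p) (m + 2 * k) m * R (m + 2 * k) m x
      = ∑ k ∈ Finset.range (p + 1), ∑ s ∈ Finset.range (k + 1),
          (h (m + 2 * p) (m + 2 * k) m * (-1 : ℝ) ^ k * ((m + k + s).choose (k - s) : ℝ) *
            ((m + 2 * s).choose s : ℝ) * (-1 : ℝ) ^ s) * (x ^ m * x ^ (2 * s)) := by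
    refine Finset.sum_congr rfl fun k _ => ?_
    rw [hR k, Finset.mul_sum, Finset.mul_sum]
    refine Finset.sum_congr rfl fun s _ => ?_
    rw [show (-x ^ 2 : ℝ) ^ s = (-1) ^ s * x ^ (2 * s) by
      rw [neg_pow, pow_mul]]
    ring
  rw [step2]
  have step3 : ∑ k ∈ Finset.range (p + 1), ∑ s ∈ Finset.range (k + 1),
          (h (m + 2 * p) (m + 2 * k) m * (-1 : ℝ) ^ k * ((m + k + s).choose (k - s) : ℝ) *
            ((m + 2 * s).choose s : ℝ) * (-1 : ℝ) ^ s) * (x ^ m * x ^ (2 * s))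
      = ∑ s ∈ Finset.range (p + 1), ∑ k ∈ Finset.Icc s p,
          (h (m + 2 * p) (m + 2 * k) m * (-1 : ℝ) ^ k * ((m + k + s).choose (k - s) : ℝ) *
            ((m + 2 * s).choose s : ℝ) * (-1 : ℝ) ^ s) * (x ^ m * x ^ (2 * s)) := by
    apply Finset.sum_comm'
    intro k s
    simp only [Finset.mem_range, Finset.mem_Icc]
    omega
  rw [step3]
  have step4 : ∀ s, s ≤ p → ∑ k ∈ Finset.Icc s p,
          (h (m + 2 * p) (m + 2 * k) m * (-1 : ℝ) ^ k * ((m + k + s).choose (k - s) : ℝ) *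
            ((m + 2 * s).choose s : ℝ) * (-1 : ℝ) ^ s) * (x ^ m * x ^ (2 * s))
      = (if s = p then 1 else 0) * (x ^ m * x ^ (2 * s)) := by
    intro s hsp
    have reidx : ∑ k ∈ Finset.Icc s p,
          (h (m + 2 * p) (m + 2 * k) m * (-1 : ℝ) ^ k * ((m + k + s).choose (k - s) : ℝ) *
            ((m + 2 * s).choose s : ℝ) * (-1 : ℝ) ^ s) * (x ^ m * x ^ (2 * s))
        = ∑ i ∈ Finset.range (p - s + 1),
          (h (m + 2 * p) (m + 2 * (s + i)) m * (-1 : ℝ) ^ (s + i) *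
            ((m + (s + i) + s).choose i : ℝ) *
            ((m + 2 * s).choose s : ℝ) * (-1 : ℝ) ^ s) * (x ^ m * x ^ (2 * s)) := by
      apply Finset.sum_nbij' (i := fun k => k - s) (j := fun i => s + i)
      · intro k hk; simp only [Finset.mem_Icc] at hk; simp only [Finset.mem_range]; omega
      · intro i hi; simp only [Finset.mem_range] at hi; simp only [Finset.mem_Icc]; omega
      · intro k hk; simp only [Finset.mem_Icc] at hk; omega
      · intro i hi; omega
      · intro k hk
        simp only [Finset.mem_Icc] at hk
        rw [show s + (k - s) = k by omega]
    rw [reidx, ← Finset.sum_mul, coeff m p s hsp]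
  rw [Finset.sum_congr rfl fun s hs => step4 s (by simpa using Nat.lt_succ_iff.mp (Finset.mem_range.mp hs))]
  simp only [ite_mul, one_mul, zero_mul,
    Finset.sum_ite_eq' (Finset.range (p + 1)) p (fun s => x ^ m * x ^ (2 * s))]
  simp [Finset.mem_range, ← pow_add]
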